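/- Let g : [a,b] → ℝ be integrable with 0 ≤ g(t) ≤ 1 for all t ∈ [a,b], and let f : [a,b] → ℝ be absolutely continuous on [a,b] with derivative f' ∈ L^1[a,b]. Setting λ = ∫_a^b g(t) dt, one has |∫_a^b f(t) g(t) dt − ∫_{b-λ}^b f(t) dt| ≤ (∫_a^{b-λ} g(t) dt) · ‖f'‖_{L^1[a,b]}. -/
import Mathlib

open MeasureTheory

open intervalIntegral Set in
/-- Fubini on the triangle `{a ≤ t ≤ s ≤ b}`. -/
lemma steffensen_tri_fubini {a b : ℝ} (hab : a ≤ b) {g k : ℝ → ℝ}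
    (hg : IntervalIntegrable g volume a b) (hk : IntervalIntegrable k volume a b) :
    (∫ t in a..b, (∫ s in t..b, k s) * g t) = ∫ s in a..b, (∫ t in a..s, g t) * k s := by
  have hg' : IntegrableOn g (Ioc a b) := by
    rwa [intervalIntegrable_iff_integrableOn_Ioc_of_le hab] at hg
  have hk' : IntegrableOn k (Ioc a b) := by
    rwa [intervalIntegrable_iff_integrableOn_Ioc_of_le hab] at hk
  set μ := volume.restrict (Ioc a b) with hμ
  set S : Set (ℝ × ℝ) := {p : ℝ × ℝ | p.1 ≤ p.2} with hSdef
  have hS : MeasurableSet S := measurableSet_le measurable_fst measurable_snd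
  set F : ℝ × ℝ → ℝ := S.indicator (fun p => g p.1 * k p.2) with hFdef
  have hF : Integrable F (μ.prod μ) := (Integrable.mul_prod hg' hk').indicator hS
  have swap := MeasureTheory.integral_integral_swap (f := fun t s => F (t, s)) (μ := μ) (ν := μ) hF
  rw [intervalIntegral.integral_of_le hab, intervalIntegral.integral_of_le hab]
  calc ∫ t in Ioc a b, (∫ s in t..b, k s) * g t
      = ∫ t in Ioc a b, ∫ s, F (t, s) ∂μ := by
        refine setIntegral_congr_fun measurableSet_Ioc (fun t ht => ?_)
        have hind : (fun s => F (t, s)) = (Ici t).indicator (fun s => g t * k s) := by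
          ext s; simp [hFdef, hSdef, Set.indicator_apply]
        rw [hind, hμ, MeasureTheory.integral_indicator measurableSet_Ici,
          Measure.restrict_restrict measurableSet_Ici]
        have hset : Ici t ∩ Ioc a b = Icc t b := by
          ext s
          simp only [Set.mem_inter_iff, Set.mem_Ici, Set.mem_Ioc, Set.mem_Icc]
          exact ⟨fun ⟨h1, _, h3⟩ => ⟨h1, h3⟩, fun ⟨h1, h2⟩ => ⟨h1, lt_of_lt_of_le ht.1 h1, h2⟩⟩
        rw [hset, integral_Icc_eq_integral_Ioc, MeasureTheory.integral_const_mul,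
          ← intervalIntegral.integral_of_le ht.2, mul_comm]
    _ = ∫ s in Ioc a b, ∫ t, F (t, s) ∂μ := swap
    _ = ∫ s in Ioc a b, (∫ t in a..s, g t) * k s := by
        refine setIntegral_congr_fun measurableSet_Ioc (fun s hs => ?_)
        have hind : (fun t => F (t, s)) = (Iic s).indicator (fun t => g t * k s) := by
          ext t; simp [hFdef, hSdef, Set.indicator_apply]
        rw [hind, hμ, MeasureTheory.integral_indicator measurableSet_Iic,
          Measure.restrict_restrict measurableSet_Iic]
        have hset : Iic s ∩ Ioc a b = Ioc a s := by
          ext t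
          simp only [Set.mem_inter_iff, Set.mem_Iic, Set.mem_Ioc]
          exact ⟨fun ⟨h1, h2, _⟩ => ⟨h2, h1⟩, fun ⟨h1, h2⟩ => ⟨h2, h1, h2.trans hs.2⟩⟩
        rw [hset, MeasureTheory.integral_mul_const _ _, ← intervalIntegral.integral_of_le hs.1.le]

theorem steffensen_L1_two (a b : ℝ) (hab : a < b) (f f' g : ℝ → ℝ)
    (hg : IntervalIntegrable g volume a b)
    (hg01 : ∀ t ∈ Set.Icc a b, 0 ≤ g t ∧ g t ≤ 1)
    (hf' : IntervalIntegrable f' volume a b)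
    (hAC : ∀ x ∈ Set.Icc a b, f x = f a + ∫ t in a..x, f' t)
    (lam : ℝ) (hlam : lam = ∫ t in a..b, g t) :
    |(∫ t in a..b, f t * g t) - ∫ t in (b - lam)..b, f t|
      ≤ (∫ t in a..(b - lam), g t) * ∫ x in a..b, |f' x| := by
  have huab : Set.uIcc a b = Set.Icc a b := Set.uIcc_of_le hab.le
  set c := b - lam with hc
  -- basic facts about lam and c
  have hlam0 : 0 ≤ lam := by
    rw [hlam]
    exact intervalIntegral.integral_nonneg hab.le (fun u hu => (hg01 u hu).1)
  have hlamle : lam ≤ b - a := by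
    rw [hlam]
    calc (∫ t in a..b, g t) ≤ ∫ t in a..b, (1 : ℝ) :=
          intervalIntegral.integral_mono_on hab.le hg intervalIntegrable_const
            (fun u hu => (hg01 u hu).2)
      _ = b - a := by simp
  have hac : a ≤ c := by simp [hc]; linarith
  have hcb : c ≤ b := by simp [hc]; linarith
  have hsub : ∀ {x y : ℝ}, x ∈ Set.Icc a b → y ∈ Set.Icc a b →
      ∀ {h : ℝ → ℝ}, IntervalIntegrable h volume a b → IntervalIntegrable h volume x y := by
    intro x y hx hy h hh
    refine hh.mono_set ?_
    exact Set.uIcc_subset_uIcc (huab ▸ hx) (huab ▸ hy)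
  have hamem : a ∈ Set.Icc a b := Set.left_mem_Icc.2 hab.le
  have hbmem : b ∈ Set.Icc a b := Set.right_mem_Icc.2 hab.le
  have hcmem : c ∈ Set.Icc a b := ⟨hac, hcb⟩
  -- primitives
  set G : ℝ → ℝ := fun s => ∫ t in a..s, g t with hGdef
  set ψ : ℝ → ℝ := fun s => max (s - c) 0 with hψdef
  have hGcont : ContinuousOn G (Set.Icc a b) := by
    rw [← huab]
    exact intervalIntegral.continuousOn_primitive_interval' hg Set.left_mem_uIcc
  have hψcont : Continuous ψ := (continuous_id.sub continuous_const).max continuous_const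
  -- representation of f
  have hfrep : ∀ t ∈ Set.Icc a b, f t = f b - ∫ s in t..b, f' s := by
    intro t ht
    have h1 := hAC t ht
    have h2 := hAC b hbmem
    have h3 : (∫ s in a..t, f' s) + ∫ s in t..b, f' s = ∫ s in a..b, f' s :=
      intervalIntegral.integral_add_adjacent_intervals (hsub hamem ht hf') (hsub ht hbmem hf')
    rw [h1, h2]; linarith
  -- integrability of the pieces
  have hIf'b : ∀ {x y : ℝ}, x ∈ Set.Icc a b → y ∈ Set.Icc a b →
      IntervalIntegrable (fun t => ∫ s in t..b, f' s) volume x y := by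
    intro x y hx hy
    apply ContinuousOn.intervalIntegrable
    apply ContinuousOn.mono _ (huab ▸ Set.uIcc_subset_uIcc (huab ▸ hx) (huab ▸ hy))
    rw [← huab]
    exact intervalIntegral.continuousOn_primitive_interval_left
      (by rwa [huab, integrableOn_Icc_iff_integrableOn_Ioc,
        ← intervalIntegrable_iff_integrableOn_Ioc_of_le hab.le])
  have hGf' : IntervalIntegrable (fun s => (ψ s - G s) * f' s) volume a b :=
    hf'.continuousOn_mul (((hψcont.continuousOn).sub (huab ▸ hGcont)))
  have hψf'ab : ∀ {x y : ℝ}, x ∈ Set.Icc a b → y ∈ Set.Icc a b →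
      IntervalIntegrable (fun s => ψ s * f' s) volume x y := by
    intro x y hx hy
    exact (hsub hx hy hf').continuousOn_mul hψcont.continuousOn
  have hGmul : IntervalIntegrable (fun s => G s * f' s) volume a b :=
    hf'.continuousOn_mul (huab ▸ hGcont)
  have hprimcont : ContinuousOn (fun t => ∫ s in t..b, f' s) (Set.Icc a b) := by
    rw [← huab]
    exact intervalIntegral.continuousOn_primitive_interval_left
      (by rw [huab, integrableOn_Icc_iff_integrableOn_Ioc]
          rwa [← intervalIntegrable_iff_integrableOn_Ioc_of_le hab.le])
  -- Step 1
  have E1 : (∫ t in a..b, f t * g t) = f b * lam - ∫ s in a..b, G s * f' s := by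
    have e1 : (∫ t in a..b, f t * g t)
        = ∫ t in a..b, (f b * g t - (∫ s in t..b, f' s) * g t) := by
      apply intervalIntegral.integral_congr
      intro t ht
      rw [huab] at ht
      show f t * g t = f b * g t - (∫ s in t..b, f' s) * g t
      rw [hfrep t ht, sub_mul]
    rw [e1, intervalIntegral.integral_sub (hg.const_mul (f b))
        (hg.continuousOn_mul (huab ▸ hprimcont)),
      intervalIntegral.integral_const_mul, ← hlam,
      steffensen_tri_fubini hab.le hg hf']
  -- Step 2
  have E2 : (∫ t in c..b, f t) = f b * lam - ∫ s in a..b, ψ s * f' s := by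
    have e1 : (∫ t in c..b, f t) = ∫ t in c..b, (f b - ∫ s in t..b, f' s) := by
      apply intervalIntegral.integral_congr
      intro t ht
      rw [Set.uIcc_of_le hcb] at ht
      show f t = f b - ∫ s in t..b, f' s
      exact hfrep t ⟨hac.trans ht.1, ht.2⟩
    have e2 : (∫ t in c..b, (∫ s in t..b, f' s) * (1 : ℝ))
        = ∫ s in c..b, (∫ t in c..s, (1 : ℝ)) * f' s :=
      steffensen_tri_fubini hcb intervalIntegrable_const (hsub hcmem hbmem hf')
    have e3 : (∫ s in c..b, (∫ t in c..s, (1 : ℝ)) * f' s) = ∫ s in c..b, (s - c) * f' s := by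
      apply intervalIntegral.integral_congr
      intro s hs
      simp
    have e4 : (∫ s in a..b, ψ s * f' s) = ∫ s in c..b, (s - c) * f' s := by
      have hadd : (∫ s in a..c, ψ s * f' s) + (∫ s in c..b, ψ s * f' s)
          = ∫ s in a..b, ψ s * f' s :=
        intervalIntegral.integral_add_adjacent_intervals (hψf'ab hamem hcmem) (hψf'ab hcmem hbmem)
      have h0 : (∫ s in a..c, ψ s * f' s) = ∫ s in a..c, (0 : ℝ) := by
        apply intervalIntegral.integral_congr
        intro s hs
        rw [Set.uIcc_of_le hac] at hs
        have hz : ψ s = 0 := max_eq_right (by linarith [hs.2])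
        show ψ s * f' s = 0
        rw [hz, zero_mul]
      have h0' : (∫ s in a..c, ψ s * f' s) = 0 := by rw [h0]; simp
      have h1 : (∫ s in c..b, ψ s * f' s) = ∫ s in c..b, (s - c) * f' s := by
        apply intervalIntegral.integral_congr
        intro s hs
        rw [Set.uIcc_of_le hcb] at hs
        have hz : ψ s = s - c := max_eq_left (by linarith [hs.1])
        show ψ s * f' s = (s - c) * f' s
        rw [hz]
      linarith
    have e5 : (∫ t in c..b, (∫ s in t..b, f' s)) = ∫ s in a..b, ψ s * f' s := by
      calc (∫ t in c..b, (∫ s in t..b, f' s))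
          = ∫ t in c..b, (∫ s in t..b, f' s) * (1 : ℝ) := by simp
        _ = ∫ s in c..b, (∫ t in c..s, (1 : ℝ)) * f' s := e2
        _ = ∫ s in c..b, (s - c) * f' s := e3
        _ = ∫ s in a..b, ψ s * f' s := e4.symm
    rw [e1, intervalIntegral.integral_sub intervalIntegrable_const (hIf'b hcmem hbmem),
      intervalIntegral.integral_const, e5]
    congr 1
    rw [smul_eq_mul, hc]
    ring
  -- combine
  have hsplit : (∫ s in a..b, (ψ s - G s) * f' s)
      = (∫ s in a..b, ψ s * f' s) - ∫ s in a..b, G s * f' s := by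
    rw [← intervalIntegral.integral_sub (hψf'ab hamem hbmem) hGmul]
    exact intervalIntegral.integral_congr (fun s _ => sub_mul _ _ _)
  have key : (∫ t in a..b, f t * g t) - (∫ t in c..b, f t)
      = ∫ s in a..b, (ψ s - G s) * f' s := by
    rw [E1, E2, hsplit]; ring
  set m : ℝ := ∫ t in a..c, g t with hm
  have hm0 : 0 ≤ m :=
    intervalIntegral.integral_nonneg hac (fun u hu => (hg01 u ⟨hu.1, hu.2.trans hcb⟩).1)
  have hbound : ∀ s ∈ Set.Icc a b, |ψ s - G s| ≤ m := by
    intro s hs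
    have hGs0 : 0 ≤ G s := intervalIntegral.integral_nonneg hs.1
      (fun u hu => (hg01 u ⟨hu.1, hu.2.trans hs.2⟩).1)
    rcases le_or_gt s c with hsc | hcs
    · have hψ0 : ψ s = 0 := max_eq_right (by linarith)
      have hadd : G s + (∫ t in s..c, g t) = m :=
        intervalIntegral.integral_add_adjacent_intervals (hsub hamem hs hg)
          (hsub hs hcmem hg)
      have h2 : 0 ≤ ∫ t in s..c, g t :=
        intervalIntegral.integral_nonneg hsc
          (fun u hu => (hg01 u ⟨hs.1.trans hu.1, hu.2.trans hcb⟩).1)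
      rw [hψ0, zero_sub, abs_neg, abs_of_nonneg hGs0]
      linarith
    · have hψ : ψ s = s - c := max_eq_left (by linarith)
      rw [hψ, abs_le]
      constructor
      · have hadd : m + (∫ t in c..s, g t) = G s :=
          intervalIntegral.integral_add_adjacent_intervals (hsub hamem hcmem hg)
            (hsub hcmem hs hg)
        have h2 : (∫ t in c..s, g t) ≤ ∫ t in c..s, (1 : ℝ) :=
          intervalIntegral.integral_mono_on hcs.le (hsub hcmem hs hg) intervalIntegrable_const
            (fun u hu => (hg01 u ⟨hac.trans hu.1, hu.2.trans hs.2⟩).2)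
        have h3 : (∫ t in c..s, (1 : ℝ)) = s - c := by simp
        linarith
      · have hadd : G s + (∫ t in s..b, g t) = lam := by
          rw [hlam]
          exact intervalIntegral.integral_add_adjacent_intervals (hsub hamem hs hg)
            (hsub hs hbmem hg)
        have h2 : (∫ t in s..b, g t) ≤ ∫ t in s..b, (1 : ℝ) :=
          intervalIntegral.integral_mono_on hs.2 (hsub hs hbmem hg) intervalIntegrable_const
            (fun u hu => (hg01 u ⟨hs.1.trans hu.1, hu.2⟩).2)
        have h3 : (∫ t in s..b, (1 : ℝ)) = b - s := by simp
        have h4 : s - c - G s ≤ 0 := by rw [hc] at *; linarith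
        linarith
  rw [key]
  calc |∫ s in a..b, (ψ s - G s) * f' s| ≤ ∫ s in a..b, |(ψ s - G s) * f' s| :=
        intervalIntegral.abs_integral_le_integral_abs hab.le
    _ ≤ ∫ s in a..b, m * |f' s| := by
        apply intervalIntegral.integral_mono_on hab.le hGf'.abs ((hf'.abs).const_mul m)
        intro x hx
        rw [abs_mul]
        exact mul_le_mul_of_nonneg_right (hbound x hx) (abs_nonneg _)
    _ = m * ∫ x in a..b, |f' x| := intervalIntegral.integral_const_mul m _
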